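/- Let {M^x_a} be projective submeasurements (each M^x_a a projection, Σ_a M^x_a ≤ 1) and {N^x_a} submeasurements. If E_{x∼μ} Σ_a ‖M^x_a − N^x_a‖_τ² ≤ δ², then E_{x∼μ} Σ_{a≠b} τ(M^x_a N^x_b) ≤ δ. -/

import Mathlib

open scoped Matrix ComplexOrder BigOperators

/-- The normalized trace (the unique tracial state on n×n complex matrices). -/
noncomputable def tau {n : ℕ} (A : Matrix (Fin n) (Fin n) ℂ) : ℂ := A.trace / (n : ℂ)

/-- The squared τ-norm, `‖A‖_τ² = τ(A*A)` (a real number). -/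
noncomputable def tauNormSq {n : ℕ} (A : Matrix (Fin n) (Fin n) ℂ) : ℝ := (tau (Aᴴ * A)).re

/-- A submeasurement: a family of positive semidefinite operators with sum at most the identity. -/
def IsSubmeasurement {n : ℕ} {α : Type*} [Fintype α]
    (M : α → Matrix (Fin n) (Fin n) ℂ) : Prop :=
  (∀ a, (M a).PosSemidef) ∧ (1 - ∑ a, M a).PosSemidef

/-- A measurement: a family of positive semidefinite operators summing to the identity. -/
def IsMeasurement {n : ℕ} {α : Type*} [Fintype α]
    (M : α → Matrix (Fin n) (Fin n) ℂ) : Prop :=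
  (∀ a, (M a).PosSemidef) ∧ (∑ a, M a) = 1

/-- A projective submeasurement: a family of orthogonal projections with sum at most the identity. -/
def IsProjectiveSubmeasurement {n : ℕ} {α : Type*} [Fintype α]
    (M : α → Matrix (Fin n) (Fin n) ℂ) : Prop :=
  (∀ a, (M a).IsHermitian ∧ M a * M a = M a) ∧ (1 - ∑ a, M a).PosSemidef


section CTChelpsec
open Matrix Finset

namespace CTChelp
variable {n : ℕ}

noncomputable def frobSq (A : Matrix (Fin n) (Fin n) ℂ) : ℝ :=
  ∑ p : Fin n × Fin n, ‖A p.2 p.1‖ ^ 2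

lemma frobSq_nonneg (A : Matrix (Fin n) (Fin n) ℂ) : 0 ≤ frobSq A :=
  Finset.sum_nonneg fun _ _ => sq_nonneg _

lemma trace_conjT_mul (A B : Matrix (Fin n) (Fin n) ℂ) :
    (Aᴴ * B).trace = ∑ p : Fin n × Fin n, (starRingEnd ℂ) (A p.2 p.1) * B p.2 p.1 := by
  rw [Fintype.sum_prod_type]
  simp [Matrix.trace, Matrix.mul_apply, Matrix.conjTranspose_apply, Matrix.diag]

lemma re_trace_conjT_mul_self (A : Matrix (Fin n) (Fin n) ℂ) :
    (Aᴴ * A).trace.re = frobSq A := by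
  rw [trace_conjT_mul, Complex.re_sum, frobSq]
  refine Finset.sum_congr rfl fun p _ => ?_
  have : (starRingEnd ℂ) (A p.2 p.1) * A p.2 p.1 = ((‖A p.2 p.1‖ ^ 2 : ℝ) : ℂ) := by
    rw [← Complex.normSq_eq_conj_mul_self]; norm_cast; rw [← Complex.sq_norm]
  rw [this, Complex.ofReal_re]

lemma re_trace_conjT_mul_le (A B : Matrix (Fin n) (Fin n) ℂ) :
    (Aᴴ * B).trace.re ≤ Real.sqrt (frobSq A) * Real.sqrt (frobSq B) := by
  rw [trace_conjT_mul, Complex.re_sum]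
  have h1 : ∀ p : Fin n × Fin n, ((starRingEnd ℂ) (A p.2 p.1) * B p.2 p.1).re
      ≤ ‖A p.2 p.1‖ * ‖B p.2 p.1‖ := by
    intro p
    calc ((starRingEnd ℂ) (A p.2 p.1) * B p.2 p.1).re
        ≤ ‖(starRingEnd ℂ) (A p.2 p.1) * B p.2 p.1‖ := Complex.re_le_norm _
      _ = ‖A p.2 p.1‖ * ‖B p.2 p.1‖ := by
          rw [norm_mul, Complex.norm_conj]
  refine (Finset.sum_le_sum fun p _ => h1 p).trans ?_
  have h2 := Finset.sum_mul_sq_le_sq_mul_sq Finset.univ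
    (fun p : Fin n × Fin n => ‖A p.2 p.1‖) (fun p => ‖B p.2 p.1‖)
  have h3 : 0 ≤ ∑ p : Fin n × Fin n, ‖A p.2 p.1‖ * ‖B p.2 p.1‖ :=
    Finset.sum_nonneg fun p _ => mul_nonneg (norm_nonneg _) (norm_nonneg _)
  calc ∑ p : Fin n × Fin n, ‖A p.2 p.1‖ * ‖B p.2 p.1‖
      = Real.sqrt ((∑ p : Fin n × Fin n, ‖A p.2 p.1‖ * ‖B p.2 p.1‖) ^ 2) :=
        (Real.sqrt_sq h3).symm
    _ ≤ Real.sqrt (frobSq A * frobSq B) := Real.sqrt_le_sqrt (h2.trans_eq rfl)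
    _ = Real.sqrt (frobSq A) * Real.sqrt (frobSq B) :=
        Real.sqrt_mul (frobSq_nonneg A) _

open scoped MatrixOrder in
lemma posSemidef_iff_eq_transpose_mul_self {A : Matrix (Fin n) (Fin n) ℂ} :
    A.PosSemidef ↔ ∃ B : Matrix (Fin n) (Fin n) ℂ, A = Bᴴ * B :=
  ⟨fun hA => CStarAlgebra.nonneg_iff_eq_star_mul_self.mp hA.nonneg,
    fun ⟨B, hB⟩ => hB ▸ posSemidef_conjTranspose_mul_self B⟩

lemma re_trace_mul_nonneg {A B : Matrix (Fin n) (Fin n) ℂ}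
    (hA : A.PosSemidef) (hB : B.PosSemidef) : 0 ≤ (A * B).trace.re := by
  obtain ⟨C, rfl⟩ := posSemidef_iff_eq_transpose_mul_self.mp hA
  obtain ⟨D, rfl⟩ := posSemidef_iff_eq_transpose_mul_self.mp hB
  have key : (Cᴴ * C * (Dᴴ * D)).trace = ((D * Cᴴ)ᴴ * (D * Cᴴ)).trace := by
    rw [conjTranspose_mul, conjTranspose_conjTranspose, mul_assoc, Matrix.trace_mul_comm]
    congr 1
    noncomm_ring
  rw [key, re_trace_conjT_mul_self]
  exact frobSq_nonneg _

lemma psd_trace_re_nonneg {A : Matrix (Fin n) (Fin n) ℂ} (hA : A.PosSemidef) :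
    0 ≤ A.trace.re := by
  obtain ⟨C, rfl⟩ := posSemidef_iff_eq_transpose_mul_self.mp hA
  rw [re_trace_conjT_mul_self]; exact frobSq_nonneg _

end CTChelp

namespace CTChelp

lemma tau_re (A : Matrix (Fin n) (Fin n) ℂ) : (tau A).re = A.trace.re * (n : ℝ)⁻¹ := by
  rw [tau, show ((n : ℕ) : ℂ) = (((n : ℕ) : ℝ) : ℂ) by push_cast; ring,
    Complex.div_ofReal_re, div_eq_mul_inv]

/-- projections are PSD -/
lemma proj_psd {P : Matrix (Fin n) (Fin n) ℂ} (hh : P.IsHermitian) (hi : P * P = P) :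
    P.PosSemidef :=
  posSemidef_iff_eq_transpose_mul_self.mpr ⟨P, by rw [hh.eq, hi]⟩

end CTChelp

end CTChelpsec

open CTChelp Matrix Finset in
/-- Closeness to consistency: if `M` is a projective submeasurement, `N` a submeasurement, and
they are `δ`-close on average over `x ∼ μ`, then they are `δ`-consistent. -/
theorem closeness_to_consistency {n : ℕ} {X α : Type*}
    [Fintype X] [Fintype α] [DecidableEq α]
    (μ : X → ℝ) (hμ0 : ∀ x, 0 ≤ μ x) (hμ1 : ∑ x, μ x = 1)
    (M N : X → α → Matrix (Fin n) (Fin n) ℂ)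
    (hM : ∀ x, IsProjectiveSubmeasurement (M x)) (hN : ∀ x, IsSubmeasurement (N x))
    (δ : ℝ) (hδ : 0 ≤ δ)
    (h : ∑ x, μ x * ∑ a, tauNormSq (M x a - N x a) ≤ δ ^ 2) :
    ∑ x, μ x * ∑ a, ∑ b, (if a = b then 0 else (tau (M x a * N x b)).re) ≤ δ := by
  classical
  set c : ℝ := (n : ℝ)⁻¹ with hc
  have hc0 : 0 ≤ c := inv_nonneg.mpr (Nat.cast_nonneg n)
  have hcn : c * (n : ℝ) ≤ 1 := by
    rcases Nat.eq_zero_or_pos n with h0 | h0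
    · simp [hc, h0]
    · rw [hc, inv_mul_cancel₀ (by positivity)]
  -- Step A : per-x matrix positivity bound
  have stepA : ∀ x, ∑ a, ∑ b, (if a = b then 0 else (tau (M x a * N x b)).re)
      ≤ ∑ a, ((M x a)ᴴ * (M x a - N x a)).trace.re * c := by
    intro x
    have hPpsd : ∀ a, (M x a).PosSemidef := fun a =>
      proj_psd ((hM x).1 a).1 ((hM x).1 a).2
    have key : ∀ a, ∑ b, (if a = b then 0 else (M x a * N x b).trace.re)
        ≤ ((M x a)ᴴ * (M x a - N x a)).trace.re := by
      intro a
      have hsplit : ∑ b, (if a = b then 0 else (M x a * N x b).trace.re)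
          = (∑ b, (M x a * N x b).trace.re) - (M x a * N x a).trace.re := by
        have hdiag : ∑ b, (if a = b then (M x a * N x b).trace.re else 0)
            = (M x a * N x a).trace.re := by simp
        rw [eq_sub_iff_add_eq, ← hdiag, ← Finset.sum_add_distrib]
        refine Finset.sum_congr rfl fun b _ => ?_
        by_cases hab : a = b <;> simp [hab]
      have hsum : ∑ b, (M x a * N x b).trace.re = (M x a * ∑ b, N x b).trace.re := by
        rw [Finset.mul_sum, Matrix.trace_sum, Complex.re_sum]
      have hmono : (M x a * ∑ b, N x b).trace.re ≤ (M x a).trace.re := by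
        have h1 : 0 ≤ (M x a * (1 - ∑ b, N x b)).trace.re :=
          re_trace_mul_nonneg (hPpsd a) (hN x).2
        rw [mul_sub, mul_one, Matrix.trace_sub, Complex.sub_re] at h1
        linarith
      have hidem : (M x a).trace.re = (M x a * M x a).trace.re := by
        rw [((hM x).1 a).2]
      have hfin : ((M x a)ᴴ * (M x a - N x a)).trace.re
          = (M x a * M x a).trace.re - (M x a * N x a).trace.re := by
        rw [((hM x).1 a).1.eq, mul_sub, Matrix.trace_sub, Complex.sub_re]
      rw [hsplit, hsum, hfin]
      linarith
    calc ∑ a, ∑ b, (if a = b then 0 else (tau (M x a * N x b)).re)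
        = (∑ a, ∑ b, (if a = b then 0 else (M x a * N x b).trace.re)) * c := by
          rw [Finset.sum_mul]
          refine Finset.sum_congr rfl fun a _ => ?_
          rw [Finset.sum_mul]
          refine Finset.sum_congr rfl fun b _ => ?_
          by_cases hab : a = b <;> simp [hab, tau_re, hc]
      _ ≤ (∑ a, ((M x a)ᴴ * (M x a - N x a)).trace.re) * c := by
          exact mul_le_mul_of_nonneg_right (Finset.sum_le_sum fun a _ => key a) hc0
      _ = ∑ a, ((M x a)ᴴ * (M x a - N x a)).trace.re * c := by rw [Finset.sum_mul]
  -- Step B : flattened Cauchy-Schwarz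
  set f : X × α → ℝ := fun p =>
    Real.sqrt (μ p.1 * c) * Real.sqrt (frobSq (M p.1 p.2)) with hf
  set g : X × α → ℝ := fun p =>
    Real.sqrt (μ p.1 * c) * Real.sqrt (frobSq (M p.1 p.2 - N p.1 p.2)) with hg
  have hμc : ∀ x : X, 0 ≤ μ x * c := fun x => mul_nonneg (hμ0 x) hc0
  have hstep2 : ∑ x, μ x * ∑ a, ((M x a)ᴴ * (M x a - N x a)).trace.re * c
      ≤ ∑ p : X × α, f p * g p := by
    rw [Fintype.sum_prod_type]
    refine Finset.sum_le_sum fun x _ => ?_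
    rw [Finset.mul_sum]
    refine Finset.sum_le_sum fun a _ => ?_
    have hcs := re_trace_conjT_mul_le (M x a) (M x a - N x a)
    have hfg : f (x, a) * g (x, a)
        = (μ x * c) * (Real.sqrt (frobSq (M x a)) * Real.sqrt (frobSq (M x a - N x a))) := by
      have hm : Real.sqrt (μ x * c) ^ 2 = μ x * c := Real.sq_sqrt (hμc x)
      calc f (x, a) * g (x, a)
          = Real.sqrt (μ x * c) ^ 2
            * (Real.sqrt (frobSq (M x a)) * Real.sqrt (frobSq (M x a - N x a))) := by
            rw [hf, hg]; ring
        _ = (μ x * c) * (Real.sqrt (frobSq (M x a)) * Real.sqrt (frobSq (M x a - N x a))) := by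
            rw [hm]
    rw [hfg]
    calc μ x * (((M x a)ᴴ * (M x a - N x a)).trace.re * c)
        = (μ x * c) * ((M x a)ᴴ * (M x a - N x a)).trace.re := by ring
      _ ≤ (μ x * c) * (Real.sqrt (frobSq (M x a)) * Real.sqrt (frobSq (M x a - N x a))) :=
          mul_le_mul_of_nonneg_left hcs (hμc x)
  have hfsq : ∑ p : X × α, f p ^ 2 ≤ 1 := by
    have hterm : ∀ p : X × α, f p ^ 2 = (μ p.1 * c) * frobSq (M p.1 p.2) := by
      intro p
      rw [hf, mul_pow, Real.sq_sqrt (hμc p.1), Real.sq_sqrt (frobSq_nonneg _)]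
    calc ∑ p : X × α, f p ^ 2 = ∑ x, ∑ a, (μ x * c) * frobSq (M x a) := by
          rw [Fintype.sum_prod_type]
          exact Finset.sum_congr rfl fun x _ => Finset.sum_congr rfl fun a _ => hterm (x, a)
      _ ≤ ∑ x, μ x := by
          refine Finset.sum_le_sum fun x _ => ?_
          have hPa : ∀ a, frobSq (M x a) = (M x a).trace.re := by
            intro a
            rw [← re_trace_conjT_mul_self, ((hM x).1 a).1.eq, ((hM x).1 a).2]
          have hsumP : ∑ a, (M x a).trace.re ≤ (n : ℝ) := by
            have h1 : 0 ≤ (1 - ∑ a, M x a).trace.re := psd_trace_re_nonneg (hM x).2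
            rw [Matrix.trace_sub, Complex.sub_re, Matrix.trace_sum, Complex.re_sum,
              Matrix.trace_one] at h1
            simpa using h1
          calc ∑ a, (μ x * c) * frobSq (M x a)
              = μ x * (c * ∑ a, (M x a).trace.re) := by
                rw [Finset.mul_sum, Finset.mul_sum]
                exact Finset.sum_congr rfl fun a _ => by rw [hPa]; ring
            _ ≤ μ x * 1 := by
                refine mul_le_mul_of_nonneg_left ?_ (hμ0 x)
                calc c * ∑ a, (M x a).trace.re ≤ c * (n : ℝ) :=
                      mul_le_mul_of_nonneg_left hsumP hc0
                  _ ≤ 1 := hcn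
            _ = μ x := mul_one _
      _ = 1 := hμ1
  have hgsq : ∑ p : X × α, g p ^ 2 ≤ δ ^ 2 := by
    have hterm : ∀ p : X × α, g p ^ 2 = μ p.1 * (frobSq (M p.1 p.2 - N p.1 p.2) * c) := by
      intro p
      rw [hg, mul_pow, Real.sq_sqrt (hμc p.1), Real.sq_sqrt (frobSq_nonneg _)]
      ring
    have htns : ∀ x a, tauNormSq (M x a - N x a) = frobSq (M x a - N x a) * c := by
      intro x a
      rw [tauNormSq, tau_re, re_trace_conjT_mul_self]
    calc ∑ p : X × α, g p ^ 2 = ∑ x, μ x * ∑ a, tauNormSq (M x a - N x a) := by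
          rw [Fintype.sum_prod_type]
          refine Finset.sum_congr rfl fun x _ => ?_
          rw [Finset.mul_sum]
          exact Finset.sum_congr rfl fun a _ => by rw [hterm (x, a), htns]
      _ ≤ δ ^ 2 := h
  have hfg0 : 0 ≤ ∑ p : X × α, f p * g p :=
    Finset.sum_nonneg fun p _ => mul_nonneg
      (mul_nonneg (Real.sqrt_nonneg _) (Real.sqrt_nonneg _))
      (mul_nonneg (Real.sqrt_nonneg _) (Real.sqrt_nonneg _))
  have hCS := Finset.sum_mul_sq_le_sq_mul_sq Finset.univ f g
  have hfsq0 : 0 ≤ ∑ p : X × α, f p ^ 2 := Finset.sum_nonneg fun p _ => sq_nonneg _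
  have hgsq0 : 0 ≤ ∑ p : X × α, g p ^ 2 := Finset.sum_nonneg fun p _ => sq_nonneg _
  have hfinal : ∑ p : X × α, f p * g p ≤ δ := by
    nlinarith [hCS, hfsq, hgsq, hfsq0, hgsq0, hfg0, hδ]
  calc ∑ x, μ x * ∑ a, ∑ b, (if a = b then 0 else (tau (M x a * N x b)).re)
      ≤ ∑ x, μ x * ∑ a, ((M x a)ᴴ * (M x a - N x a)).trace.re * c :=
        Finset.sum_le_sum fun x _ => mul_le_mul_of_nonneg_left (stepA x) (hμ0 x)
    _ ≤ ∑ p : X × α, f p * g p := hstep2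
    _ ≤ δ := hfinal
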